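/- For any N×N matrix A with nonnegative integer entries, left multiplication by S_Aᵀ maps the subgroup (I−(A^G)ᵀ)ℤ^{E_A} into (I−Aᵀ)ℤ^N and induces a group isomorphism Φ_{S_Aᵀ} : ℤ^{E_A}/(I−(A^G)ᵀ)ℤ^{E_A} → ℤ^N/(I−Aᵀ)ℤ^N whose inverse is the homomorphism induced by left multiplication by R_Aᵀ. -/

import Mathlib

open Matrix

/-- The edge set of the directed graph of a rectangular matrix `C` with nonnegative integer
entries: there are `C i j` edges from vertex `i` to vertex `j`. -/
def Edge {N M : ℕ} (C : Matrix (Fin N) (Fin M) ℕ) : Type :=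
  Σ i : Fin N, Σ j : Fin M, Fin (C i j)

instance {N M : ℕ} (C : Matrix (Fin N) (Fin M) ℕ) : Fintype (Edge C) := by
  unfold Edge
  haveI : ∀ i, Fintype (Σ j : Fin M, Fin (C i j)) := fun i => inferInstance
  infer_instance

instance {N M : ℕ} (C : Matrix (Fin N) (Fin M) ℕ) : DecidableEq (Edge C) := by
  unfold Edge; infer_instance

/-- The source vertex of an edge. -/
def Edge.src {N M : ℕ} {C : Matrix (Fin N) (Fin M) ℕ} (e : Edge C) : Fin N := e.1

/-- The target vertex of an edge. -/
def Edge.tar {N M : ℕ} {C : Matrix (Fin N) (Fin M) ℕ} (e : Edge C) : Fin M := e.2.1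
lemma sum_edge {N M : ℕ} (C : Matrix (Fin N) (Fin M) ℕ) (f : Edge C → ℤ) :
    ∑ e : Edge C, f e = ∑ i, ∑ j, ∑ m : Fin (C i j), f ⟨i, j, m⟩ := by
  haveI : ∀ i, Fintype (Σ j : Fin M, Fin (C i j)) := fun i => inferInstance
  have h : ∑ e : Edge C, f e = ∑ e : (Σ i : Fin N, Σ j : Fin M, Fin (C i j)), f e := by
    refine Fintype.sum_equiv ?_ _ _ ?_
    exacts [Equiv.refl _, fun _ => rfl]
  rw [h]
  exact (Fintype.sum_sigma _).trans (Finset.sum_congr rfl fun i _ => by convert Fintype.sum_sigma (fun y => f ⟨i, y⟩))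


/-- For any `N×N` matrix `A` with nonnegative integer entries, left
multiplication by `S_Aᵀ` maps `(I−(A^G)ᵀ)ℤ^{E_A}` into `(I−Aᵀ)ℤ^N` and induces a group
isomorphism `Φ_{S_Aᵀ} : ℤ^{E_A}/(I−(A^G)ᵀ)ℤ^{E_A} → ℤ^N/(I−Aᵀ)ℤ^N` whose inverse is
induced by left multiplication by `R_Aᵀ`. -/
theorem stmt_7 (N : ℕ) (A : Matrix (Fin N) (Fin N) ℕ) :
    let SA : Matrix (Edge A) (Fin N) ℤ := Matrix.of fun e j => if e.tar = j then 1 else 0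
    let RA : Matrix (Fin N) (Edge A) ℤ := Matrix.of fun i e => if e.src = i then 1 else 0
    let AG : Matrix (Edge A) (Edge A) ℤ :=
      Matrix.of fun e f => if e.tar = f.src then 1 else 0
    let Az : Matrix (Fin N) (Fin N) ℤ := A.map (Nat.cast : ℕ → ℤ)
    (∀ v ∈ AddMonoidHom.range (1 - AGᵀ).mulVecLin.toAddMonoidHom,
        SAᵀ.mulVec v ∈ AddMonoidHom.range (1 - Azᵀ).mulVecLin.toAddMonoidHom) ∧
    ∃ Φ : ((Edge A → ℤ) ⧸ AddMonoidHom.range (1 - AGᵀ).mulVecLin.toAddMonoidHom) ≃+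
          ((Fin N → ℤ) ⧸ AddMonoidHom.range (1 - Azᵀ).mulVecLin.toAddMonoidHom),
      (∀ v : Edge A → ℤ,
          Φ (QuotientAddGroup.mk v) = QuotientAddGroup.mk (SAᵀ.mulVec v)) ∧
      (∀ w : Fin N → ℤ,
          Φ.symm (QuotientAddGroup.mk w) = QuotientAddGroup.mk (RAᵀ.mulVec w)) := by
  intro SA RA AG Az
  -- matrix identities
  have hAG : AG = SA * RA := by
    ext e f
    simp only [AG, SA, RA, Matrix.mul_apply, Matrix.of_apply, ite_mul, one_mul, zero_mul]
    rw [Finset.sum_ite_eq Finset.univ e.tar fun j => if f.src = j then (1:ℤ) else 0]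
    simp [eq_comm]
  have hAz : Az = RA * SA := by
    ext i j
    simp only [Az, RA, SA, Matrix.mul_apply, Matrix.of_apply, Matrix.map_apply]
    rw [sum_edge A fun e => (if e.src = i then (1:ℤ) else 0) * (if e.tar = j then 1 else 0)]
    simp only [Edge.src, Edge.tar]
    have key : ∀ a : Fin N → Fin N → ℕ, ((a i j : ℕ) : ℤ) = ∑ i_1, ∑ j_1, ∑ m : Fin (a i_1 j_1),
        (if i_1 = i then (1:ℤ) else 0) * if j_1 = j then 1 else 0 := by
      intro a
      simp [Finset.sum_const, Finset.card_univ, mul_ite, mul_one, mul_zero, smul_ite,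
        smul_zero, Finset.sum_ite_eq, apply_ite Finset.card, apply_ite (Nat.cast : ℕ → ℤ)]
    exact key A
  have hS : SAᵀ * AGᵀ = Azᵀ * SAᵀ := by
    rw [hAG, hAz, Matrix.transpose_mul, Matrix.transpose_mul, ← Matrix.mul_assoc]
  have hR : RAᵀ * Azᵀ = AGᵀ * RAᵀ := by
    rw [hAG, hAz, Matrix.transpose_mul, Matrix.transpose_mul, ← Matrix.mul_assoc]
  have hcomm1 : SAᵀ * (1 - AGᵀ) = (1 - Azᵀ) * SAᵀ := by
    rw [Matrix.mul_sub, Matrix.sub_mul, Matrix.mul_one, Matrix.one_mul, hS]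
  have hcomm2 : RAᵀ * (1 - Azᵀ) = (1 - AGᵀ) * RAᵀ := by
    rw [Matrix.mul_sub, Matrix.sub_mul, Matrix.mul_one, Matrix.one_mul, hR]
  set HE := AddMonoidHom.range (1 - AGᵀ).mulVecLin.toAddMonoidHom with hHE
  set HN := AddMonoidHom.range (1 - Azᵀ).mulVecLin.toAddMonoidHom with hHN
  have hmemE : ∀ v : Edge A → ℤ, (1 - AGᵀ).mulVec v ∈ HE := fun v => ⟨v, rfl⟩
  have hmemN : ∀ w : Fin N → ℤ, (1 - Azᵀ).mulVec w ∈ HN := fun w => ⟨w, rfl⟩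
  have key : ∀ v ∈ HE, SAᵀ.mulVec v ∈ HN := by
    rintro v ⟨x, rfl⟩
    refine ⟨SAᵀ.mulVec x, ?_⟩
    show (1 - Azᵀ).mulVec (SAᵀ.mulVec x) = SAᵀ.mulVec ((1 - AGᵀ).mulVecLin x)
    show (1 - Azᵀ).mulVec (SAᵀ.mulVec x) = SAᵀ.mulVec ((1 - AGᵀ).mulVec x)
    rw [Matrix.mulVec_mulVec, Matrix.mulVec_mulVec, hcomm1]
  have keyR : ∀ w ∈ HN, RAᵀ.mulVec w ∈ HE := by
    rintro w ⟨x, rfl⟩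
    refine ⟨RAᵀ.mulVec x, ?_⟩
    show (1 - AGᵀ).mulVec (RAᵀ.mulVec x) = RAᵀ.mulVec ((1 - Azᵀ).mulVec x)
    rw [Matrix.mulVec_mulVec, Matrix.mulVec_mulVec, hcomm2]
  refine ⟨key, ?_⟩
  let φ0 : (Edge A → ℤ) →+ ((Fin N → ℤ) ⧸ HN) :=
    (QuotientAddGroup.mk' HN).comp (SAᵀ.mulVecLin.toAddMonoidHom)
  let ψ0 : (Fin N → ℤ) →+ ((Edge A → ℤ) ⧸ HE) :=
    (QuotientAddGroup.mk' HE).comp (RAᵀ.mulVecLin.toAddMonoidHom)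
  have hφ0 : ∀ v ∈ HE, φ0 v = 0 := fun v hv =>
    (QuotientAddGroup.eq_zero_iff _).mpr (key v hv)
  have hψ0 : ∀ w ∈ HN, ψ0 w = 0 := fun w hw =>
    (QuotientAddGroup.eq_zero_iff _).mpr (keyR w hw)
  let Φ0 : ((Edge A → ℤ) ⧸ HE) →+ ((Fin N → ℤ) ⧸ HN) := QuotientAddGroup.lift HE φ0 hφ0
  let Ψ0 : ((Fin N → ℤ) ⧸ HN) →+ ((Edge A → ℤ) ⧸ HE) := QuotientAddGroup.lift HN ψ0 hψ0
  have hΦmk : ∀ v : Edge A → ℤ, Φ0 (QuotientAddGroup.mk v) = QuotientAddGroup.mk (SAᵀ.mulVec v) :=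
    fun v => rfl
  have hΨmk : ∀ w : Fin N → ℤ, Ψ0 (QuotientAddGroup.mk w) = QuotientAddGroup.mk (RAᵀ.mulVec w) :=
    fun w => rfl
  have hleft : ∀ q, Ψ0 (Φ0 q) = q := by
    intro q
    refine QuotientAddGroup.induction_on q fun v => ?_
    rw [hΦmk, hΨmk, Matrix.mulVec_mulVec]
    refine QuotientAddGroup.eq_iff_sub_mem.mpr ?_
    have h : (RAᵀ * SAᵀ).mulVec v - v = (1 - AGᵀ).mulVec (-v) := by
      rw [hAG, Matrix.transpose_mul, Matrix.sub_mulVec, Matrix.one_mulVec,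
        Matrix.mulVec_neg]
      abel
    rw [h]; exact hmemE (-v)
  have hright : ∀ q, Φ0 (Ψ0 q) = q := by
    intro q
    refine QuotientAddGroup.induction_on q fun w => ?_
    rw [hΨmk, hΦmk, Matrix.mulVec_mulVec]
    refine QuotientAddGroup.eq_iff_sub_mem.mpr ?_
    have h : (SAᵀ * RAᵀ).mulVec w - w = (1 - Azᵀ).mulVec (-w) := by
      rw [hAz, Matrix.transpose_mul, Matrix.sub_mulVec, Matrix.one_mulVec,
        Matrix.mulVec_neg]
      abel
    rw [h]; exact hmemN (-w)
  refine ⟨AddEquiv.mk' ⟨Φ0, Ψ0, hleft, hright⟩ Φ0.map_add', hΦmk, hΨmk⟩
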